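/- Let 0 < u < 1, and set ν = (1 + sqrt(1 + 8/u))/4. Let δ > 0 satisfy νδ < u/(1-u). If 1 < c_0 ≤ 1/(1-u) - δ and 1 < c_1 ≤ 1/(1-u) - νδ, and c_2 = sqrt(c_1(c_0 - 1)/u), then c_2 ≤ 1/(1-u) - ν²δ. -/

import Mathlib

theorem stmt_4 (u : ℝ) (hu0 : 0 < u) (hu1 : u < 1)
    (ν : ℝ) (hν : ν = (1 + Real.sqrt (1 + 8 / u)) / 4)
    (δ : ℝ) (hδ : 0 < δ) (hδν : ν * δ < u / (1 - u))
    (c₀ c₁ c₂ : ℝ) (hc₀l : 1 < c₀) (hc₀ : c₀ ≤ 1 / (1 - u) - δ)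
    (hc₁l : 1 < c₁) (hc₁ : c₁ ≤ 1 / (1 - u) - ν * δ)
    (hc₂ : c₂ = Real.sqrt (c₁ * (c₀ - 1) / u)) :
    c₂ ≤ 1 / (1 - u) - ν ^ 2 * δ := by
  have h1u : 0 < 1 - u := by linarith
  have hs : Real.sqrt (1 + 8 / u) ^ 2 = 1 + 8 / u := Real.sq_sqrt (by positivity)
  have hs3 : (3 : ℝ) < Real.sqrt (1 + 8 / u) := by
    rw [show (3 : ℝ) = Real.sqrt 9 by
      rw [show (9 : ℝ) = 3 ^ 2 by norm_num, Real.sqrt_sq (by norm_num)]]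
    apply Real.sqrt_lt_sqrt (by norm_num)
    have : 8 < 8 / u := by
      rw [lt_div_iff₀ hu0]; nlinarith
    linarith
  have hν1 : 1 < ν := by rw [hν]; linarith
  have key : u * (2 * ν ^ 2 - ν) = 1 := by
    have h : 2 * ν ^ 2 - ν = (Real.sqrt (1 + 8 / u) ^ 2 - 1) / 8 := by rw [hν]; ring
    rw [h, hs]
    field_simp
    ring
  -- A := 1/(1-u)
  set A := 1 / (1 - u) with hA
  have hAu : A * (1 - u) = 1 := by rw [hA]; field_simp
  have huA : u / (1 - u) = u * A := by rw [hA]; ring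
  rw [huA] at hδν
  have hApos : 0 < A := by positivity
  have huν : u * ν * (2 * ν - 1) = 1 := by nlinarith [key]
  have hAν : ν ^ 2 * δ < A := by nlinarith [key, hδν, hν1, hδ, hApos, mul_pos hu0 hApos]
  have h5 : 1 ≤ u * ν ^ 3 := by nlinarith [huν, sq_nonneg (ν - 1)]
  -- the product bound
  have hX : c₁ * (c₀ - 1) / u ≤ (A - ν ^ 2 * δ) ^ 2 := by
    rw [div_le_iff₀ hu0]
    have h1 : c₀ - 1 ≤ u * A - δ := by
      have : A - 1 = u * A := by nlinarith [hAu]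
      linarith
    have h3 : c₁ * (c₀ - 1) ≤ (A - ν * δ) * (u * A - δ) := by
      apply mul_le_mul hc₁ h1 (by linarith) (by nlinarith [hδν, hν1, hδ])
    have e : (A - ν ^ 2 * δ) ^ 2 * u - (A - ν * δ) * (u * A - δ)
        = A * δ * (1 - u * (2 * ν ^ 2 - ν)) + δ ^ 2 * (ν * (u * ν ^ 3 - 1)) := by ring
    rw [key] at e
    have hnn : 0 ≤ δ ^ 2 * (ν * (u * ν ^ 3 - 1)) := by
      apply mul_nonneg (sq_nonneg δ)
      exact mul_nonneg (by linarith) (by linarith)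
    linarith
  rw [hc₂]
  calc Real.sqrt (c₁ * (c₀ - 1) / u) ≤ Real.sqrt ((A - ν ^ 2 * δ) ^ 2) :=
        Real.sqrt_le_sqrt hX
    _ = A - ν ^ 2 * δ := Real.sqrt_sq (by linarith)
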